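/- Every plane graph G admits, for every assignment of lists of size 12 to its edges, an edge colouring from the lists such that no facial path of G is repetitively coloured; i.e., the facial Thue choice index of every plane graph is at most 12. -/

import Mathlib

/-- A (connected) plane graph presented combinatorially by the boundary walks of
its faces: each face is a cyclic list of edges (with a fixed orientation), and
every edge appears exactly twice among the boundary walks of all faces. -/
structure FacialGraph (E : Type*) [DecidableEq E] where
  faces : List (List E)
  appears_twice : ∀ e : E, ((faces.map fun w => w.count e).sum) = 2

/-- `P` is a facial path: a (nonrepeated-edge) path whose consecutive edges are
consecutive edges of the boundary walk of some face, read cyclically in one of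
the two directions (`w ++ w` accounts for cyclic wrap-around). -/
def IsFacialPath {E : Type*} [DecidableEq E] (G : FacialGraph E) (P : List E) : Prop :=
  P.Nodup ∧ ∃ w ∈ G.faces, P.length ≤ w.length ∧
    (P <:+: (w ++ w) ∨ P.reverse <:+: (w ++ w))

set_option linter.unusedSectionVars false
set_option linter.deprecated false

/-- Compatibility: `List.get?` as `l[i]?`. -/
def List.get? {α : Type*} (l : List α) (i : ℕ) : Option α := l[i]?

@[simp] theorem List.get?_eq_getElem? {α : Type*} (l : List α) (i : ℕ) : l.get? i = l[i]? := rfl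

theorem List.get?_map {α β : Type*} (f : α → β) (l : List α) (n : ℕ) :
    (l.map f).get? n = (l.get? n).map f := List.getElem?_map
theorem List.get?_mem {α : Type*} {l : List α} {n : ℕ} {a : α} (h : l.get? n = some a) :
    a ∈ l := List.mem_of_getElem? h
theorem List.get?_of_mem {α : Type*} {l : List α} {a : α} (h : a ∈ l) :
    ∃ n, l.get? n = some a := List.getElem?_of_mem h
theorem List.get?_eq_none {α : Type*} {l : List α} {n : ℕ} :
    l.get? n = none ↔ l.length ≤ n := List.getElem?_eq_none_iff
theorem List.get?_take {α : Type*} {l : List α} {n m : ℕ} (h : m < n) :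
    (l.take n).get? m = l.get? m := List.getElem?_take_of_lt h
theorem List.get?_drop {α : Type*} (L : List α) (i j : ℕ) :
    (L.drop i).get? j = L.get? (i + j) := List.getElem?_drop
theorem List.get?_append {α : Type*} {l₁ l₂ : List α} {n : ℕ} (hn : n < l₁.length) :
    (l₁ ++ l₂).get? n = l₁.get? n := List.getElem?_append_left hn
theorem List.get?_append_right {α : Type*} {l₁ l₂ : List α} {n : ℕ} (hn : l₁.length ≤ n) :
    (l₁ ++ l₂).get? n = l₂.get? (n - l₁.length) := List.getElem?_append_right hn
theorem List.get?_reverse {α : Type*} {l : List α} {i : ℕ} (h : i < l.length) :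
    l.reverse.get? i = l.get? (l.length - 1 - i) := List.getElem?_reverse h

namespace ThueAux

open List Finset

variable {E : Type*} [DecidableEq E] [Fintype E]

/-- A window of length `2*h` starting at position `s` of the cyclic word `w`. -/
def window (w : List E) (s h : ℕ) : List E := ((w ++ w).drop s).take (2 * h)

/-- All canonical windows of all faces. -/
def windows (G : FacialGraph E) : List (List E) :=
  G.faces.flatMap fun w =>
    (List.range w.length).flatMap fun s =>
      (List.range w.length).flatMap fun h =>
        if 1 ≤ h ∧ 2 * h ≤ w.length then [window w s h] else []

/-- `P` is repetitively coloured by `χ`. -/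
def Rep (χ : E → ℕ) (P : List E) : Prop :=
  ∀ i < P.length / 2, (P.map χ).get? i = (P.map χ).get? (P.length / 2 + i)

/-- No nodup window inside `S` is repetitively coloured. -/
def Good (G : FacialGraph E) (S : Finset E) (χ : E → ℕ) : Prop :=
  ∀ P ∈ windows G, P.Nodup → (∀ e ∈ P, e ∈ S) → ¬ Rep χ P

open scoped Classical in
/-- The finset of partial good colourings with support `S`. -/
noncomputable def A (G : FacialGraph E) (L : E → Finset ℕ) (S : Finset E) : Finset (E → ℕ) :=
  (Fintype.piFinset fun e => if e ∈ S then L e else {0}).filter (Good G S)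

lemma mem_A {G : FacialGraph E} {L : E → Finset ℕ} {S : Finset E} {χ : E → ℕ} :
    χ ∈ A G L S ↔ (∀ e : E, χ e ∈ if e ∈ S then L e else ({0} : Finset ℕ)) ∧ Good G S χ := by
  classical
  simp [A, Fintype.mem_piFinset]

lemma mem_windows {G : FacialGraph E} {P : List E} :
    P ∈ windows G ↔ ∃ w ∈ G.faces, ∃ s h : ℕ, s < w.length ∧ h < w.length ∧
      1 ≤ h ∧ 2 * h ≤ w.length ∧ P = window w s h := by
  simp only [windows, List.mem_flatMap, List.mem_range]
  constructor
  · rintro ⟨w, hw, s, hs, h, hh, hP⟩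
    split at hP
    · rename_i hc
      simp only [List.mem_singleton] at hP
      exact ⟨w, hw, s, h, hs, hh, hc.1, hc.2, hP⟩
    · simp at hP
  · rintro ⟨w, hw, s, h, hs, hh, h1, h2, rfl⟩
    exact ⟨w, hw, s, hs, h, hh, by simp [h1, h2]⟩

lemma window_length {w : List E} {s h : ℕ} (hs : s < w.length) (h2 : 2 * h ≤ w.length) :
    (window w s h).length = 2 * h := by
  simp only [window, List.length_take, List.length_drop, List.length_append]
  omega

lemma length_of_mem_windows {G : FacialGraph E} {P : List E} (hP : P ∈ windows G) :
    P.length = 2 * (P.length / 2) ∧ 1 ≤ P.length / 2 := by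
  rw [mem_windows] at hP
  obtain ⟨w, _, s, h, hs, _, h1, h2, rfl⟩ := hP
  rw [window_length hs h2]
  omega

lemma Rep_congr {χ₁ χ₂ : E → ℕ} {P : List E} (hag : ∀ e ∈ P, χ₁ e = χ₂ e) :
    Rep χ₁ P ↔ Rep χ₂ P := by
  have key : ∀ i, Option.map χ₁ (P.get? i) = Option.map χ₂ (P.get? i) := by
    intro i
    cases hp : P.get? i with
    | none => rfl
    | some e => simp [hag e (List.get?_mem hp)]
  constructor <;> intro hr i hi <;> have := hr i hi <;>
      simp only [List.get?_map] at this ⊢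
  · rw [← key, ← key]; exact this
  · rw [key, key]; exact this


/-- Generic union bound over a list of events. -/
lemma card_filter_exists_le {α β : Type*} (s : Finset α) (l : List β) (r : α → β → Prop)
    [∀ a b, Decidable (r a b)] :
    (s.filter fun a => ∃ b ∈ l, r a b).card ≤ (l.map fun b => (s.filter fun a => r a b).card).sum := by
  classical
  induction l with
  | nil => simp
  | cons x xs ih =>
    have hsub : (s.filter fun a => ∃ b ∈ x :: xs, r a b) ⊆
        (s.filter fun a => r a x) ∪ (s.filter fun a => ∃ b ∈ xs, r a b) := by
      intro a ha
      simp only [Finset.mem_filter, List.mem_cons, Finset.mem_union] at ha ⊢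
      obtain ⟨has, b, hb | hb, hr⟩ := ha
      · exact Or.inl ⟨has, hb ▸ hr⟩
      · exact Or.inr ⟨has, b, hb, hr⟩
    calc (s.filter fun a => ∃ b ∈ x :: xs, r a b).card
        ≤ _ := Finset.card_le_card hsub
      _ ≤ _ + _ := Finset.card_union_le _ _
      _ ≤ (s.filter fun a => r a x).card + (xs.map fun b => (s.filter fun a => r a b).card).sum :=
          Nat.add_le_add_left ih _
      _ = _ := by simp

variable (G : FacialGraph E) (L : E → Finset ℕ)

/-- Extensions of good colourings of `S` by a colour of `v` from its list. -/
noncomputable def Ext (S : Finset E) (v : E) : Finset (E → ℕ) :=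
  ((A G L S) ×ˢ (L v)).image fun p => Function.update p.1 v p.2

lemma A_zero_outside {S : Finset E} {χ : E → ℕ} (hχ : χ ∈ A G L S) {e : E} (he : e ∉ S) :
    χ e = 0 := by
  have := (mem_A.1 hχ).1 e
  simp [he] at this
  exact this

lemma card_Ext {S : Finset E} {v : E} (hv : v ∉ S) :
    (Ext G L S v).card = (A G L S).card * (L v).card := by
  classical
  rw [Ext, Finset.card_image_of_injOn, Finset.card_product]
  rintro ⟨χ₁, a₁⟩ h₁ ⟨χ₂, a₂⟩ h₂ heq
  simp only [Finset.mem_coe, Finset.mem_product] at h₁ h₂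
  have ha : a₁ = a₂ := by
    have := congrFun heq v
    simpa using this
  have hχ : χ₁ = χ₂ := by
    funext e
    by_cases he : e = v
    · subst he
      rw [A_zero_outside G L h₁.1 hv, A_zero_outside G L h₂.1 hv]
    · have := congrFun heq e
      simpa [Function.update_of_ne he] using this
  simp [ha, hχ]

lemma Ext_mem_pi {S : Finset E} {v : E} {χ' : E → ℕ} (hχ' : χ' ∈ Ext G L S v) :
    ∀ e : E, χ' e ∈ if e ∈ insert v S then L e else ({0} : Finset ℕ) := by
  classical
  rw [Ext, Finset.mem_image] at hχ'
  obtain ⟨⟨χ, a⟩, hp, rfl⟩ := hχ'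
  rw [Finset.mem_product] at hp
  intro e
  by_cases he : e = v
  · subst he; simpa using hp.2
  · rw [Function.update_of_ne he]
    have := (mem_A.1 hp.1).1 e
    by_cases heS : e ∈ S <;> simp_all [he, heS]

lemma Ext_good_off {S : Finset E} {v : E} {χ' : E → ℕ} (hχ' : χ' ∈ Ext G L S v) :
    ∀ Q ∈ windows G, Q.Nodup → (∀ e ∈ Q, e ∈ insert v S) → v ∉ Q → ¬ Rep χ' Q := by
  classical
  rw [Ext, Finset.mem_image] at hχ'
  obtain ⟨⟨χ, a⟩, hp, rfl⟩ := hχ'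
  rw [Finset.mem_product] at hp
  intro Q hQw hQn hQS hvQ hrep
  have hag : ∀ e ∈ Q, Function.update χ v a e = χ e := by
    intro e he
    exact Function.update_of_ne (fun (h : e = v) => hvQ (by rwa [h] at he)) _ _
  rw [Rep_congr hag] at hrep
  refine (mem_A.1 hp.1).2 Q hQw hQn ?_ hrep
  intro e he
  rcases Finset.mem_insert.1 (hQS e he) with h | h
  · exact absurd (by rwa [h] at he) hvQ
  · exact h

lemma A_insert_subset_Ext {S : Finset E} {v : E} (hv : v ∉ S) :
    A G L (insert v S) ⊆ Ext G L S v := by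
  classical
  intro χ' hχ'
  rw [Ext, Finset.mem_image]
  refine ⟨⟨Function.update χ' v 0, χ' v⟩, ?_, ?_⟩
  · rw [Finset.mem_product]
    constructor
    · show Function.update χ' v 0 ∈ A G L S
      rw [mem_A]
      constructor
      · intro e
        by_cases he : e = v
        · subst he; simp [hv]
        · rw [Function.update_of_ne he]
          have := (mem_A.1 hχ').1 e
          by_cases heS : e ∈ S
          · simpa [heS, Finset.mem_insert, he] using this
          · simpa [heS, Finset.mem_insert, he] using this
      · intro Q hQw hQn hQS hrep
        have hvQ : v ∉ Q := fun hvQ => hv (hQS v hvQ)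
        have hag : ∀ e ∈ Q, Function.update χ' v 0 e = χ' e := fun e he =>
          Function.update_of_ne (fun (h : e = v) => hvQ (by rwa [h] at he)) _ _
        rw [Rep_congr hag] at hrep
        exact (mem_A.1 hχ').2 Q hQw hQn
          (fun e he => Finset.mem_insert_of_mem (hQS e he)) hrep
    · show χ' v ∈ L v
      have := (mem_A.1 hχ').1 v
      simpa using this
  · funext e
    by_cases he : e = v
    · subst he; simp
    · simp [Function.update_of_ne he]


/-- The half of `P` containing `v` (if `v ∈ P`), as a finset. -/
def half (P : List E) (v : E) : Finset E :=
  if v ∈ P.take (P.length / 2) then (P.take (P.length / 2)).toFinset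
  else (P.drop (P.length / 2)).toFinset

lemma mem_half_self {P : List E} {v : E} (hv : v ∈ P) : v ∈ half P v := by
  unfold half
  split
  · rwa [List.mem_toFinset]
  · rename_i hc
    rw [List.mem_toFinset]
    rw [← List.take_append_drop (P.length / 2) P, List.mem_append] at hv
    tauto

lemma mem_of_mem_half {P : List E} {v e : E} (he : e ∈ half P v) : e ∈ P := by
  unfold half at he
  split at he <;> rw [List.mem_toFinset] at he
  · exact List.mem_of_mem_take he
  · exact List.mem_of_mem_drop he

lemma card_half {P : List E} {v : E} (hn : P.Nodup)
    (hlen : P.length = 2 * (P.length / 2)) : (half P v).card = P.length / 2 := by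
  unfold half
  split
  · rw [List.card_toFinset, ((P.take_sublist _).nodup hn).dedup, List.length_take]
    omega
  · rw [List.card_toFinset, ((P.drop_sublist _).nodup hn).dedup, List.length_drop]
    omega

lemma exists_get? {l : List E} {e : E} (h : e ∈ l) :
    ∃ i, i < l.length ∧ l.get? i = some e := by
  obtain ⟨n, hn⟩ := List.get?_of_mem h
  refine ⟨n, ?_, hn⟩
  by_contra hlt
  rw [List.get?_eq_none.2 (le_of_not_gt hlt)] at hn
  cases hn

lemma get?_some_of_lt {l : List E} {i : ℕ} (h : i < l.length) :
    ∃ e, l.get? i = some e := by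
  cases hp : l.get? i with
  | none => rw [List.get?_eq_none] at hp; omega
  | some e => exact ⟨e, rfl⟩

open scoped Classical in
lemma card_bad_le (S : Finset E) (v : E) {P : List E} (hPw : P ∈ windows G) :
    ((Ext G L S v).filter fun χ' => Rep χ' P ∧ v ∈ P ∧ P.Nodup ∧
        ∀ e ∈ P, e ∈ insert v S).card
      ≤ (A G L (insert v S \ half P v)).card := by
  classical
  set T := insert v S with hT
  set h := P.length / 2 with hh
  obtain ⟨hlen, hh1⟩ := length_of_mem_windows hPw
  by_cases hcond : v ∈ P ∧ P.Nodup ∧ ∀ e ∈ P, e ∈ T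
  swap
  · have : ((Ext G L S v).filter fun χ' => Rep χ' P ∧ v ∈ P ∧ P.Nodup ∧
        ∀ e ∈ P, e ∈ T) = ∅ := by
      rw [Finset.filter_eq_empty_iff]
      intro χ' _ hc
      exact hcond ⟨hc.2.1, hc.2.2.1, hc.2.2.2⟩
    rw [this]; simp
  obtain ⟨hvP, hnd, hPT⟩ := hcond
  have hdisj : ∀ e, e ∈ P.take h → e ∈ P.drop h → False := by
    have := hnd
    rw [← List.take_append_drop h P, List.nodup_append] at this
    intro e h1 h2
    exact this.2.2 e h1 e h2 rfl
  apply Finset.card_le_card_of_injOn (fun χ' e => if e ∈ half P v then 0 else χ' e)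
  · -- maps into A (T \ half P v)
    intro χ' hχ'
    rw [Finset.mem_coe, Finset.mem_filter] at hχ'
    obtain ⟨hE, hrep, -, -, -⟩ := hχ'
    rw [Finset.mem_coe, mem_A]
    constructor
    · intro e
      by_cases heh : e ∈ half P v
      · simp [heh, Finset.mem_sdiff]
      · have := Ext_mem_pi G L hE e
        by_cases heT : e ∈ T
        · simp only [heh, if_neg, ite_false]
          rw [if_pos (show e ∈ insert v S from heT)] at this
          simpa [Finset.mem_sdiff, heT, heh] using this
        · have heT' : e ∉ T \ half P v := fun hc => heT (Finset.mem_sdiff.1 hc).1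
          simp only [heh, ite_false, heT', if_neg]
          rw [if_neg (show e ∉ insert v S from heT)] at this
          simpa [heT] using this
    · intro Q hQw hQn hQS hrepQ
      have hQhalf : ∀ e ∈ Q, e ∉ half P v := fun e he =>
        (Finset.mem_sdiff.1 (hQS e he)).2
      have hag : ∀ e ∈ Q, (fun e => if e ∈ half P v then 0 else χ' e) e = χ' e := by
        intro e he
        simp [hQhalf e he]
      rw [Rep_congr hag] at hrepQ
      have hvQ : v ∉ Q := fun hc => hQhalf v hc (mem_half_self hvP)
      exact Ext_good_off G L hE Q hQw hQn
        (fun e he => (Finset.mem_sdiff.1 (hQS e he)).1) hvQ hrepQ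
  · -- injective on the bad set
    intro χ₁ hχ₁ χ₂ hχ₂ heq
    rw [Finset.mem_coe, Finset.mem_filter] at hχ₁ hχ₂
    obtain ⟨-, hrep₁, -, -, -⟩ := hχ₁
    obtain ⟨-, hrep₂, -, -, -⟩ := hχ₂
    have hout : ∀ e, e ∉ half P v → χ₁ e = χ₂ e := by
      intro e he
      have := congrFun heq e
      simpa [he] using this
    funext e
    by_cases heh : e ∈ half P v
    swap
    · exact hout e heh
    · unfold half at heh
      split at heh
      · -- v (and e) in the first half
        rw [List.mem_toFinset] at heh
        obtain ⟨i, hi, hgi⟩ := exists_get? heh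
        rw [List.length_take] at hi
        have hi' : i < h := by omega
        have hgPi : P.get? i = some e := by
          rw [← List.get?_take (by omega : i < h)]; exact hgi
        obtain ⟨e₂, he₂⟩ := get?_some_of_lt (show h + i < P.length by omega)
        have he₂d : e₂ ∈ P.drop h := by
          have : (P.drop h).get? i = some e₂ := by
            rw [List.get?_drop]; exact he₂
          exact List.get?_mem this
        have he₂h : e₂ ∉ half P v := by
          unfold half
          rw [if_pos (by assumption), List.mem_toFinset]
          intro hc
          exact hdisj e₂ hc he₂d
        have key : ∀ χ' : E → ℕ, Rep χ' P → χ' e = χ' e₂ := by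
          intro χ' hrep
          have := hrep i (by omega)
          rw [List.get?_map, List.get?_map, hgPi, he₂] at this
          simpa using this
        rw [key χ₁ hrep₁, key χ₂ hrep₂]
        exact hout e₂ he₂h
      · -- v (and e) in the second half
        rw [List.mem_toFinset] at heh
        obtain ⟨i, hi, hgi⟩ := exists_get? heh
        rw [List.length_drop] at hi
        have hi' : i < h := by omega
        have hgPi : P.get? (h + i) = some e := by
          rw [← List.get?_drop]; exact hgi
        obtain ⟨e₁, he₁⟩ := get?_some_of_lt (show i < P.length by omega)
        have he₁t : e₁ ∈ P.take h := by
          have : (P.take h).get? i = some e₁ := by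
            rw [List.get?_take hi']; exact he₁
          exact List.get?_mem this
        have he₁h : e₁ ∉ half P v := by
          unfold half
          rw [if_neg (by assumption), List.mem_toFinset]
          intro hc
          exact hdisj e₁ he₁t hc
        have key : ∀ χ' : E → ℕ, Rep χ' P → χ' e = χ' e₁ := by
          intro χ' hrep
          have := hrep i (by omega)
          rw [List.get?_map, List.get?_map, hgPi, he₁] at this
          simpa using this.symm
        rw [key χ₁ hrep₁, key χ₂ hrep₂]
        exact hout e₁ he₁h


lemma card_positions_le (w : List E) (v : E) :
    ((Finset.range w.length).filter fun j => w.get? j = some v).card ≤ w.count v := by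
  classical
  induction w with
  | nil => simp
  | cons a t ih =>
    rw [List.count_cons]
    have hsub : (Finset.range (a :: t).length).filter (fun j => (a :: t).get? j = some v) ⊆
        ((((Finset.range t.length).filter (fun j => t.get? j = some v))).image Nat.succ) ∪
          (if a = v then {0} else ∅) := by
      intro j hj
      simp only [Finset.mem_filter, Finset.mem_range, List.length_cons] at hj
      cases j with
      | zero =>
        have : a = v := by simpa using hj.2
        simp [this]
      | succ k =>
        simp only [Finset.mem_union, Finset.mem_image, Finset.mem_filter, Finset.mem_range]
        left
        exact ⟨k, ⟨by omega, by simpa using hj.2⟩, rfl⟩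
    calc _ ≤ _ := Finset.card_le_card hsub
    _ ≤ _ + _ := Finset.card_union_le _ _
    _ ≤ _ := by
        rw [Finset.card_image_of_injective _ Nat.succ_injective]
        exact Nat.add_le_add ih (by split <;> simp_all)

lemma card_window_mem_le (w : List E) (v : E) {h : ℕ} (h1 : 1 ≤ h) (h2 : 2 * h ≤ w.length) :
    ((Finset.range w.length).filter fun s => v ∈ window w s h).card ≤ 2 * h * w.count v := by
  classical
  have hwpos : 0 < w.length := by omega
  set occ := (Finset.range w.length).filter fun j => w.get? j = some v with hocc
  have key : ∀ s, s < w.length → v ∈ window w s h →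
      (window w s h).idxOf v < 2 * h ∧
        w.get? ((s + (window w s h).idxOf v) % w.length) = some v := by
    intro s hs hv
    have hlw : (window w s h).length = 2 * h := window_length hs h2
    have hlt : (window w s h).idxOf v < (window w s h).length :=
      List.idxOf_lt_length_iff.2 hv
    set t := (window w s h).idxOf v with htdef
    have ht : t < 2 * h := hlw ▸ hlt
    have hwin : (window w s h).get? t = some v := by
      rw [List.get?_eq_getElem?, List.getElem?_eq_getElem hlt]
      exact congrArg some (List.getElem_idxOf hlt)
    have hww : (w ++ w).get? (s + t) = some v := by
      rw [window] at hwin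
      rw [List.get?_take ht, List.get?_drop] at hwin
      exact hwin
    refine ⟨ht, ?_⟩
    by_cases hcase : s + t < w.length
    · rw [Nat.mod_eq_of_lt hcase]
      rwa [List.get?_append hcase] at hww
    · push_neg at hcase
      have hmod : (s + t) % w.length = s + t - w.length := by
        rw [Nat.mod_eq_sub_mod hcase, Nat.mod_eq_of_lt (by omega)]
      rw [hmod]
      rwa [List.get?_append_right hcase] at hww
  apply le_trans (Finset.card_le_card_of_injOn
    (fun s => ((window w s h).idxOf v, (s + (window w s h).idxOf v) % w.length))
    ?_ ?_) ?_
  · exact (Finset.range (2 * h)) ×ˢ occ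
  · intro s hs
    rw [Finset.mem_coe, Finset.mem_filter, Finset.mem_range] at hs
    obtain ⟨ht, hj⟩ := key s hs.1 hs.2
    rw [Finset.mem_coe, Finset.mem_product, Finset.mem_range, hocc, Finset.mem_filter, Finset.mem_range]
    exact ⟨ht, Nat.mod_lt _ hwpos, hj⟩
  · intro s₁ hs₁ s₂ hs₂ heq
    rw [Finset.mem_coe, Finset.mem_filter, Finset.mem_range] at hs₁ hs₂
    obtain ⟨ht₁, -⟩ := key s₁ hs₁.1 hs₁.2
    obtain ⟨ht₂, -⟩ := key s₂ hs₂.1 hs₂.2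
    rw [Prod.mk.injEq] at heq
    obtain ⟨hteq, hmeq⟩ := heq
    rw [hteq] at hmeq
    set t := (window w s₂ h).idxOf v
    have e₁ : (s₁ + t) % w.length = s₁ + t ∨
        (w.length ≤ s₁ + t ∧ (s₁ + t) % w.length = s₁ + t - w.length) := by
      by_cases hc : s₁ + t < w.length
      · exact Or.inl (Nat.mod_eq_of_lt hc)
      · push_neg at hc
        exact Or.inr ⟨hc, by rw [Nat.mod_eq_sub_mod hc, Nat.mod_eq_of_lt (by omega)]⟩
    have e₂ : (s₂ + t) % w.length = s₂ + t ∨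
        (w.length ≤ s₂ + t ∧ (s₂ + t) % w.length = s₂ + t - w.length) := by
      by_cases hc : s₂ + t < w.length
      · exact Or.inl (Nat.mod_eq_of_lt hc)
      · push_neg at hc
        exact Or.inr ⟨hc, by rw [Nat.mod_eq_sub_mod hc, Nat.mod_eq_of_lt (by omega)]⟩
    have hb₁ : s₁ < w.length := hs₁.1
    have hb₂ : s₂ < w.length := hs₂.1
    have hlt2 : t < w.length := by omega
    omega
  · rw [Finset.card_product, Finset.card_range]
    exact Nat.mul_le_mul_left _ (card_positions_le w v)

lemma sum_map_flatMap {α β γ : Type*} [AddCommMonoid γ] (l : List α) (F : α → List β)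
    (g : β → γ) :
    ((l.flatMap F).map g).sum = (l.map fun x => ((F x).map g).sum).sum := by
  induction l with
  | nil => simp
  | cons x xs ih => simp [List.flatMap_cons, ih]

lemma sum_map_range {γ : Type*} [AddCommMonoid γ] (n : ℕ) (f : ℕ → γ) :
    ((List.range n).map f).sum = ∑ i ∈ Finset.range n, f i := by
  induction n with
  | zero => simp
  | succ k ih => rw [List.range_succ, Finset.sum_range_succ, List.map_append]; simp [ih]

/-- The weight of a window. -/
noncomputable def wt (P : List E) : ℝ := (1 / 4 : ℝ) ^ (P.length / 2 - 1)

lemma wt_nonneg (P : List E) : 0 ≤ wt P := by unfold wt; positivity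

lemma geom_bound (K : ℕ) :
    ∑ x ∈ Finset.range K, (2 * x : ℝ) * (1 / 4 : ℝ) ^ (x - 1) ≤ 4 := by
  have hterm : ∀ x : ℕ, (2 * x : ℝ) * (1 / 4 : ℝ) ^ (x - 1) = 8 * (x * (1 / 4 : ℝ) ^ x) := by
    intro x
    cases x with
    | zero => simp
    | succ k =>
      have : ((1 : ℝ) / 4) ^ (k + 1 - 1) = 4 * (1 / 4 : ℝ) ^ (k + 1) := by
        rw [Nat.add_sub_cancel, pow_succ]; ring
      rw [this]; push_cast; ring
  have hgeo : HasSum (fun n : ℕ => (n : ℝ) * (1 / 4 : ℝ) ^ n)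
      ((1 / 4 : ℝ) / (1 - 1 / 4) ^ 2) := by
    apply hasSum_coe_mul_geometric_of_norm_lt_one
    rw [Real.norm_eq_abs, abs_of_nonneg (by norm_num : (0:ℝ) ≤ 1/4)]; norm_num
  have hpart : ∑ x ∈ Finset.range K, (x : ℝ) * (1 / 4 : ℝ) ^ x ≤ (1 / 4 : ℝ) / (1 - 1 / 4) ^ 2 :=
    sum_le_hasSum _ (fun i _ => by positivity) hgeo
  calc ∑ x ∈ Finset.range K, (2 * x : ℝ) * (1 / 4 : ℝ) ^ (x - 1)
      = 8 * ∑ x ∈ Finset.range K, (x : ℝ) * (1 / 4 : ℝ) ^ x := by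
        rw [Finset.mul_sum]; exact Finset.sum_congr rfl fun x _ => hterm x
    _ ≤ 8 * ((1 / 4 : ℝ) / (1 - 1 / 4) ^ 2) := by
        apply mul_le_mul_of_nonneg_left hpart (by norm_num)
    _ ≤ 4 := by norm_num

lemma sum_mul_left {α : Type*} (l : List α) (c : ℝ) (f : α → ℝ) :
    (l.map fun x => c * f x).sum = c * (l.map f).sum := by
  induction l with
  | nil => simp
  | cons x xs ih => simp [ih]; ring

lemma sum_wt_le (v : E) :
    ((windows G).map fun P => if v ∈ P then wt P else 0).sum ≤ 8 := by
  classical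
  rw [windows, sum_map_flatMap]
  have hface : ∀ w : List E,
      (((List.range w.length).flatMap fun s => (List.range w.length).flatMap fun h =>
          if 1 ≤ h ∧ 2 * h ≤ w.length then [window w s h] else []).map
        fun P => if v ∈ P then wt P else 0).sum ≤ 4 * (w.count v : ℝ) := by
    intro w
    rw [sum_map_flatMap]
    have hins : ∀ s : ℕ,
        (((List.range w.length).flatMap fun h =>
            if 1 ≤ h ∧ 2 * h ≤ w.length then [window w s h] else []).map
          fun P => if v ∈ P then wt P else 0).sum
        = ∑ h ∈ Finset.range w.length, (if 1 ≤ h ∧ 2 * h ≤ w.length then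
            (if v ∈ window w s h then wt (window w s h) else 0) else 0) := by
      intro s
      rw [sum_map_flatMap, sum_map_range]
      refine Finset.sum_congr rfl fun h _ => ?_
      split <;> simp
    calc ((List.range w.length).map fun s =>
            (((List.range w.length).flatMap fun h =>
              if 1 ≤ h ∧ 2 * h ≤ w.length then [window w s h] else []).map
              fun P => if v ∈ P then wt P else 0).sum).sum
        = ∑ s ∈ Finset.range w.length, ∑ h ∈ Finset.range w.length,
            (if 1 ≤ h ∧ 2 * h ≤ w.length then
              (if v ∈ window w s h then wt (window w s h) else 0) else 0) := by
          rw [sum_map_range]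
          exact Finset.sum_congr rfl fun s _ => hins s
      _ = ∑ h ∈ Finset.range w.length, ∑ s ∈ Finset.range w.length,
            (if 1 ≤ h ∧ 2 * h ≤ w.length then
              (if v ∈ window w s h then wt (window w s h) else 0) else 0) :=
          Finset.sum_comm
      _ ≤ ∑ h ∈ Finset.range w.length, (2 * h : ℝ) * (1 / 4 : ℝ) ^ (h - 1) * (w.count v) := by
          apply Finset.sum_le_sum
          intro h _
          by_cases hc : 1 ≤ h ∧ 2 * h ≤ w.length
          swap
          · have hrw : ∀ s ∈ Finset.range w.length,
                (if 1 ≤ h ∧ 2 * h ≤ w.length then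
                  (if v ∈ window w s h then wt (window w s h) else 0) else 0) = 0 :=
              fun s _ => if_neg hc
            rw [Finset.sum_congr rfl hrw, Finset.sum_const_zero]
            positivity
          · have hwt : ∀ s ∈ Finset.range w.length,
                (if 1 ≤ h ∧ 2 * h ≤ w.length then
                  (if v ∈ window w s h then wt (window w s h) else 0) else 0)
                  = (if v ∈ window w s h then ((1:ℝ)/4) ^ (h-1) else 0) := by
              intro s hs
              rw [Finset.mem_range] at hs
              rw [if_pos hc]
              split
              · rw [wt, window_length hs hc.2]
                congr 1
                omega
              · rfl
            rw [Finset.sum_congr rfl hwt, ← Finset.sum_filter, Finset.sum_const]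
            rw [nsmul_eq_mul]
            calc (((Finset.range w.length).filter fun s => v ∈ window w s h).card : ℝ)
                  * ((1:ℝ)/4) ^ (h-1)
                ≤ ((2 * h * w.count v : ℕ) : ℝ) * ((1:ℝ)/4) ^ (h-1) := by
                  apply mul_le_mul_of_nonneg_right _ (by positivity)
                  exact_mod_cast card_window_mem_le w v hc.1 hc.2
              _ = (2 * h : ℝ) * (1 / 4 : ℝ) ^ (h - 1) * (w.count v) := by
                  push_cast; ring
      _ = (∑ h ∈ Finset.range w.length, (2 * h : ℝ) * (1 / 4 : ℝ) ^ (h - 1)) * (w.count v) := by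
          rw [Finset.sum_mul]
      _ ≤ 4 * (w.count v : ℝ) :=
          mul_le_mul_of_nonneg_right (geom_bound _) (by positivity)
  calc (G.faces.map fun w =>
          (((List.range w.length).flatMap fun s => (List.range w.length).flatMap fun h =>
            if 1 ≤ h ∧ 2 * h ≤ w.length then [window w s h] else []).map
          fun P => if v ∈ P then wt P else 0).sum).sum
      ≤ (G.faces.map fun w => 4 * (w.count v : ℝ)).sum := by
        apply List.sum_le_sum
        intro w _
        exact hface w
    _ = 4 * ((G.faces.map fun w => (w.count v : ℝ)).sum) := sum_mul_left _ _ _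
    _ = 4 * (((G.faces.map fun w => w.count v).sum : ℕ) : ℝ) := by
        rw [Nat.cast_list_sum, List.map_map]; rfl
    _ = 8 := by rw [G.appears_twice v]; norm_num


open scoped Classical in
lemma step (hL : ∀ e, 12 ≤ (L e).card) (S : Finset E) (v : E) (hv : v ∉ S)
    (HypA : ∀ S' ⊆ S, 4 ^ (S.card - S'.card) * (A G L S').card ≤ (A G L S).card) :
    4 * (A G L S).card ≤ (A G L (insert v S)).card := by
  classical
  set T := insert v S with hT
  set x : ℝ := ((A G L S).card : ℝ) with hx
  have hx0 : 0 ≤ x := by positivity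
  -- the bad colourings are covered by the windows through `v`
  have hcover : Ext G L S v \ A G L T ⊆
      (Ext G L S v).filter fun χ' => ∃ P ∈ windows G,
        Rep χ' P ∧ v ∈ P ∧ P.Nodup ∧ ∀ e ∈ P, e ∈ T := by
    intro χ' hχ'
    rw [Finset.mem_sdiff] at hχ'
    obtain ⟨hE, hnA⟩ := hχ'
    rw [Finset.mem_filter]
    refine ⟨hE, ?_⟩
    by_contra hno
    push_neg at hno
    apply hnA
    rw [mem_A]
    refine ⟨Ext_mem_pi G L hE, ?_⟩
    intro P hPw hPn hPS hrep
    by_cases hvP : v ∈ P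
    · obtain ⟨e, heP, heT⟩ := hno P hPw hrep hvP hPn
      exact heT (hPS e heP)
    · exact Ext_good_off G L hE P hPw hPn hPS hvP hrep
  have hub : (Ext G L S v \ A G L T).card ≤
      ((windows G).map fun P => ((Ext G L S v).filter fun χ' =>
        Rep χ' P ∧ v ∈ P ∧ P.Nodup ∧ ∀ e ∈ P, e ∈ T).card).sum :=
    le_trans (Finset.card_le_card hcover)
      (card_filter_exists_le (Ext G L S v) (windows G) _)
  -- bound each term by the weight
  have hperP : ∀ P ∈ windows G,
      ((((Ext G L S v).filter fun χ' => Rep χ' P ∧ v ∈ P ∧ P.Nodup ∧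
          ∀ e ∈ P, e ∈ T).card : ℕ) : ℝ)
        ≤ (if v ∈ P then wt P else 0) * x := by
    intro P hPw
    by_cases hcond : v ∈ P ∧ P.Nodup ∧ ∀ e ∈ P, e ∈ T
    swap
    · have hempty : ((Ext G L S v).filter fun χ' => Rep χ' P ∧ v ∈ P ∧ P.Nodup ∧
          ∀ e ∈ P, e ∈ T) = ∅ := by
        rw [Finset.filter_eq_empty_iff]
        intro χ' _ hc
        exact hcond ⟨hc.2.1, hc.2.2.1, hc.2.2.2⟩
      rw [hempty]
      have : (0:ℝ) ≤ (if v ∈ P then wt P else 0) * x := by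
        apply mul_nonneg _ hx0
        split
        · exact wt_nonneg P
        · exact le_refl 0
      simpa using this
    · obtain ⟨hvP, hnd, hPT⟩ := hcond
      obtain ⟨hlen, hh1⟩ := length_of_mem_windows hPw
      set hP := P.length / 2 with hPdef
      have hhalfP : half P v ⊆ T := fun e he => hPT e (mem_of_mem_half he)
      have hchalf : (half P v).card = hP := card_half hnd hlen
      have hTm : T.card = S.card + 1 := Finset.card_insert_of_notMem hv
      have hsub : T \ half P v ⊆ S := by
        intro e he
        rw [Finset.mem_sdiff] at he
        rcases Finset.mem_insert.1 he.1 with h | h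
        · exact absurd (by rw [h]; exact mem_half_self hvP) he.2
        · exact h
      have hcardTd : (T \ half P v).card = T.card - hP := by
        rw [Finset.card_sdiff_of_subset hhalfP, hchalf]
      have hle1 : (T \ half P v).card ≤ S.card := Finset.card_le_card hsub
      have hPle : hP ≤ T.card := hchalf ▸ Finset.card_le_card hhalfP
      have hdiff : S.card - (T \ half P v).card = hP - 1 := by
        rw [hcardTd, hTm]
        rw [hTm] at hPle
        omega
      have h1 : ((Ext G L S v).filter fun χ' => Rep χ' P ∧ v ∈ P ∧ P.Nodup ∧
          ∀ e ∈ P, e ∈ T).card ≤ (A G L (T \ half P v)).card := card_bad_le G L S v hPw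
      have h2 : 4 ^ (hP - 1) * (A G L (T \ half P v)).card ≤ (A G L S).card := by
        have := HypA (T \ half P v) hsub
        rwa [hdiff] at this
      have h2' : ((A G L (T \ half P v)).card : ℝ) ≤ (1/4 : ℝ) ^ (hP - 1) * x := by
        have hc : ((4:ℝ) ^ (hP-1)) * ((A G L (T \ half P v)).card : ℝ) ≤ x := by
          rw [hx]
          exact_mod_cast h2
        have h4 : (0:ℝ) < (4:ℝ) ^ (hP - 1) := by positivity
        rw [div_pow, one_pow, div_mul_eq_mul_div, le_div_iff₀ h4, one_mul]
        rw [mul_comm] at hc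
        exact hc
      calc ((((Ext G L S v).filter fun χ' => Rep χ' P ∧ v ∈ P ∧ P.Nodup ∧
            ∀ e ∈ P, e ∈ T).card : ℕ) : ℝ)
          ≤ ((A G L (T \ half P v)).card : ℝ) := by exact_mod_cast h1
        _ ≤ (1/4 : ℝ) ^ (hP - 1) * x := h2'
        _ = (if v ∈ P then wt P else 0) * x := by rw [if_pos hvP, wt]
  -- assemble
  have hsumR : (((windows G).map fun P => ((Ext G L S v).filter fun χ' =>
      Rep χ' P ∧ v ∈ P ∧ P.Nodup ∧ ∀ e ∈ P, e ∈ T).card).sum : ℝ) ≤ 8 * x := by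
    rw [Nat.cast_list_sum, List.map_map]
    calc ((windows G).map fun P => ((((Ext G L S v).filter fun χ' =>
            Rep χ' P ∧ v ∈ P ∧ P.Nodup ∧ ∀ e ∈ P, e ∈ T).card : ℕ) : ℝ)).sum
        ≤ ((windows G).map fun P => (if v ∈ P then wt P else 0) * x).sum := by
          apply List.sum_le_sum
          intro P hPw
          exact hperP P hPw
      _ = ((windows G).map fun P => x * (if v ∈ P then wt P else 0)).sum := by
          congr 1
          exact List.map_congr_left fun P _ => mul_comm _ _
      _ = x * ((windows G).map fun P => (if v ∈ P then wt P else 0)).sum :=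
          sum_mul_left _ _ _
      _ ≤ x * 8 := by
          apply mul_le_mul_of_nonneg_left (sum_wt_le G v) hx0
      _ = 8 * x := mul_comm _ _
  have hAT : A G L T ⊆ Ext G L S v := A_insert_subset_Ext G L hv
  have hcsd : (Ext G L S v \ A G L T).card = (Ext G L S v).card - (A G L T).card :=
    Finset.card_sdiff_of_subset hAT
  have hATle : (A G L T).card ≤ (Ext G L S v).card := Finset.card_le_card hAT
  have hExtcard : (Ext G L S v).card = (A G L S).card * (L v).card := card_Ext G L hv
  have h12 : 12 * (A G L S).card ≤ (Ext G L S v).card := by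
    rw [hExtcard, mul_comm]
    exact Nat.mul_le_mul_left _ (hL v)
  -- final inequality over ℝ
  have hfinal : (12:ℝ) * x ≤ ((A G L T).card : ℝ) + 8 * x := by
    calc (12:ℝ) * x ≤ ((Ext G L S v).card : ℝ) := by rw [hx]; exact_mod_cast h12
      _ ≤ ((A G L T).card : ℝ) + ((Ext G L S v \ A G L T).card : ℝ) := by
          rw [hcsd, Nat.cast_sub hATle]
          linarith
      _ ≤ ((A G L T).card : ℝ) + 8 * x := by
          exact add_le_add le_rfl (le_trans (by exact_mod_cast hub) hsumR)
  have hfin2 : (4:ℝ) * ((A G L S).card : ℝ) ≤ ((A G L T).card : ℝ) := by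
    rw [← hx]; linarith
  exact_mod_cast hfin2

lemma insert_card_le (hL : ∀ e, 12 ≤ (L e).card) :
    ∀ (n : ℕ) (S : Finset E), S.card = n → ∀ v ∉ S,
      4 * (A G L S).card ≤ (A G L (insert v S)).card := by
  intro n
  induction n using Nat.strong_induction_on with
  | _ n IH =>
  intro S hS v hv
  apply step G L hL S v hv
  have chain : ∀ (k : ℕ) (S' : Finset E), S' ⊆ S → S.card = S'.card + k →
      4 ^ k * (A G L S').card ≤ (A G L S).card := by
    intro k
    induction k with
    | zero =>
      intro S' hsub hcard
      have : S' = S := Finset.eq_of_subset_of_card_le hsub (by omega)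
      rw [this]
      simp
    | succ k ihk =>
      intro S' hsub hcard
      have hne : ∃ u, u ∈ S ∧ u ∉ S' := by
        by_contra hno
        push_neg at hno
        have := Finset.card_le_card (fun u hu => hno u hu)
        omega
      obtain ⟨u, huS, huS'⟩ := hne
      have h1 : 4 * (A G L S').card ≤ (A G L (insert u S')).card :=
        IH S'.card (by omega) S' rfl u huS'
      have h2 : 4 ^ k * (A G L (insert u S')).card ≤ (A G L S).card := by
        apply ihk (insert u S') (Finset.insert_subset huS hsub)
        rw [Finset.card_insert_of_notMem huS']
        omega
      calc 4 ^ (k+1) * (A G L S').card = 4 ^ k * (4 * (A G L S').card) := by ring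
        _ ≤ 4 ^ k * (A G L (insert u S')).card := Nat.mul_le_mul_left _ h1
        _ ≤ _ := h2
  intro S' hsub
  exact chain (S.card - S'.card) S' hsub
    (by have := Finset.card_le_card hsub; omega)

lemma A_nonempty (hL : ∀ e, 12 ≤ (L e).card) (S : Finset E) : 1 ≤ (A G L S).card := by
  classical
  induction S using Finset.induction_on with
  | empty =>
    have hmem : (fun _ : E => 0) ∈ A G L ∅ := by
      rw [mem_A]
      constructor
      · intro e
        simp
      · intro P hPw hPn hPS hrep
        obtain ⟨hlen, hh1⟩ := length_of_mem_windows hPw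
        have hne : P ≠ [] := by
          intro h
          rw [h] at hh1
          simp at hh1
        obtain ⟨e, he⟩ := List.exists_mem_of_ne_nil P hne
        exact absurd (hPS e he) (Finset.notMem_empty e)
    exact Finset.card_pos.2 ⟨_, hmem⟩
  | @insert v S hv ih =>
    calc 1 ≤ 4 * (A G L S).card := by omega
      _ ≤ _ := insert_card_le G L hL S.card S rfl v hv


lemma infix_window {w P : List E} (hinf : P <:+: (w ++ w)) {h : ℕ} (h1 : 1 ≤ h)
    (hPlen : P.length = 2 * h) (hle : 2 * h ≤ w.length) :
    ∃ s < w.length, P = window w s h := by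
  obtain ⟨l, t, hlt⟩ := hinf
  have hdropl : (w ++ w).drop l.length = P ++ t := by
    rw [← hlt, List.append_assoc, List.drop_left]
  have hP : P = ((w ++ w).drop l.length).take (2 * h) := by
    rw [hdropl, ← hPlen, List.take_left]
  have hlens : l.length + (2 * h + t.length) = 2 * w.length := by
    have := congrArg List.length hlt
    simp [hPlen] at this
    omega
  by_cases hsl : l.length < w.length
  · exact ⟨l.length, hsl, hP⟩
  · push_neg at hsl
    set s := l.length - w.length with hs
    refine ⟨s, by omega, ?_⟩
    have e1 : (w ++ w).drop l.length = w.drop s := by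
      have : l.length = w.length + s := by omega
      rw [this]
      have := List.drop_append (l₁ := w) (l₂ := w) (i := w.length + s)
      simpa using this
    have e2 : (w ++ w).drop s = w.drop s ++ w := by
      rw [List.drop_append_of_le_length (by omega)]
    have e3 : (w.drop s ++ w).take (2 * h) = (w.drop s).take (2 * h) := by
      apply List.take_append_of_le_length
      rw [List.length_drop]
      omega
    rw [hP, window, e1, e2, e3]

end ThueAux

/-- The facial Thue choice index of every plane graph is at most 12: for every
assignment of lists of size 12 to the edges there is an edge colouring from the
lists such that no facial path is repetitively coloured. -/
theorem stmt_19 {E : Type*} [DecidableEq E] [Fintype E] (G : FacialGraph E)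
    (L : E → Finset ℕ) (hL : ∀ e, 12 ≤ (L e).card) :
    ∃ c : E → ℕ, (∀ e, c e ∈ L e) ∧
      ∀ P : List E, IsFacialPath G P → ∀ h : ℕ, 1 ≤ h → P.length = 2 * h →
        ∃ i < h, (P.map c)[i]? ≠ (P.map c)[h + i]? := by
  classical
  have hA := ThueAux.A_nonempty G L hL Finset.univ
  have hpos : 0 < (ThueAux.A G L Finset.univ).card := hA
  obtain ⟨c, hcmem⟩ := Finset.card_pos.1 hpos
  rw [ThueAux.mem_A] at hcmem
  refine ⟨c, ?_, ?_⟩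
  · intro e
    have := hcmem.1 e
    simpa using this
  · intro P hFP h hh1 hPlen
    by_contra hno
    push_neg at hno
    obtain ⟨hnd, w, hwf, hlenle, hcase⟩ := hFP
    have h2le : 2 * h ≤ w.length := hPlen ▸ hlenle
    rcases hcase with hinf | hinf
    · obtain ⟨s, hs, hPw⟩ := ThueAux.infix_window hinf hh1 hPlen h2le
      have hwin : P ∈ ThueAux.windows G := by
        rw [ThueAux.mem_windows]
        exact ⟨w, hwf, s, h, hs, by omega, hh1, h2le, hPw⟩
      apply hcmem.2 P hwin hnd (fun e _ => Finset.mem_univ e)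
      intro i hi
      have hdiv : P.length / 2 = h := by omega
      rw [hdiv] at hi ⊢
      exact hno i hi
    · set Q := P.reverse with hQ
      have hQlen : Q.length = 2 * h := by rw [hQ, List.length_reverse]; exact hPlen
      obtain ⟨s, hs, hQw⟩ := ThueAux.infix_window hinf hh1 hQlen h2le
      have hwin : Q ∈ ThueAux.windows G := by
        rw [ThueAux.mem_windows]
        exact ⟨w, hwf, s, h, hs, by omega, hh1, h2le, hQw⟩
      apply hcmem.2 Q hwin (List.nodup_reverse.2 hnd) (fun e _ => Finset.mem_univ e)
      intro i hi
      have hdiv : Q.length / 2 = h := by omega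
      rw [hdiv] at hi ⊢
      have hQm : Q.map c = (P.map c).reverse := by rw [hQ, List.map_reverse]
      have hlm : (P.map c).length = 2 * h := by rw [List.length_map]; exact hPlen
      rw [hQm, List.get?_reverse (by rw [hlm]; omega), List.get?_reverse (by rw [hlm]; omega),
        hlm]
      have hi' : h - 1 - i < h := by omega
      have e₁ : 2 * h - 1 - i = h + (h - 1 - i) := by omega
      have e₂ : 2 * h - 1 - (h + i) = h - 1 - i := by omega
      rw [e₁, e₂]
      exact (hno _ hi').symm
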